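/- Let F satisfy Assumption 2 and a > 0, and let b_F and g be the unique constant and the unique differentiable solution on ℝ of g'(x) = a·x² − b_F − F(g(x)) with x·g(x) ≤ 0 for all x ∈ ℝ. Then g is twice differentiable and satisfies the second-order ordinary differential equation g''(x) = 2a·x − F'(g(x))·g'(x) for all x ∈ ℝ; moreover, g is the unique twice differentiable function on ℝ satisfying this second-order equation together with x·g(x) ≤ 0 for all x ∈ ℝ. -/

import Mathlib

/-- Assumption 2 on the function `F`. -/
structure Assumption2 (F : ℝ → ℝ) : Prop where
  convex : ConvexOn ℝ Set.univ F
  diff : Differentiable ℝ F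
  even : ∀ x : ℝ, F (-x) = F x
  strictMonoOn : StrictMonoOn F (Set.Ici 0)
  map_zero : F 0 = 0
  deriv_diffOn : ∀ x ∈ Set.Ici (0 : ℝ), DifferentiableAt ℝ (deriv F) x
  deriv_strictMonoOn : StrictMonoOn (deriv F) (Set.Ici 0)
  deriv_zero : deriv F 0 = 0
  growth : ∃ K > (0 : ℝ), ∃ p : ℝ, 2 ≤ p ∧ ∀ x : ℝ, F x ≤ K * (1 + |x| ^ p)
  second_deriv_lb : ∃ C > (0 : ℝ), ∃ x₀ > (0 : ℝ), ∀ x : ℝ, x₀ < |x| → C < deriv (deriv F) x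

open Set

lemma aux_monoF {F : ℝ → ℝ} (hF : Assumption2 F) : MonotoneOn F (Ici 0) :=
  hF.strictMonoOn.monotoneOn

lemma aux_monoF' {F : ℝ → ℝ} (hF : Assumption2 F) : MonotoneOn (deriv F) (Ici 0) :=
  hF.deriv_strictMonoOn.monotoneOn

lemma aux_derivF_nonneg {F : ℝ → ℝ} (hF : Assumption2 F) {y : ℝ} (hy : 0 ≤ y) :
    0 ≤ deriv F y := by
  have := aux_monoF' hF (mem_Ici.mpr le_rfl) (mem_Ici.mpr hy) hy
  rwa [hF.deriv_zero] at this

lemma aux_derivF_pos {F : ℝ → ℝ} (hF : Assumption2 F) {y : ℝ} (hy : 0 < y) :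
    0 < deriv F y := by
  have := hF.deriv_strictMonoOn (mem_Ici.mpr le_rfl) (mem_Ici.mpr hy.le) hy
  rwa [hF.deriv_zero] at this

/-- tangent line inequality from monotonicity of `deriv F` (MVT). -/
lemma aux_tangent {F : ℝ → ℝ} (hF : Assumption2 F) {p t : ℝ} (hp : 0 ≤ p) (ht : 0 ≤ t) :
    deriv F p * t ≤ F (p + t) - F p := by
  have key := (convex_Ici p).mul_sub_le_image_sub_of_le_deriv
    (f := F) hF.diff.continuous.continuousOn hF.diff.differentiableOn
    (C := deriv F p) ?hge p (mem_Ici.mpr le_rfl) (p + t) (mem_Ici.mpr (by linarith))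
    (by linarith)
  · simpa using key
  · intro y hy
    rw [interior_Ici] at hy
    exact aux_monoF' hF (mem_Ici.mpr hp) (mem_Ici.mpr (hp.trans (le_of_lt hy))) (le_of_lt hy)

/-- zero at the origin from the sign condition. -/
lemma aux_sign_zero {g : ℝ → ℝ} (hg : Differentiable ℝ g) (hs : ∀ x, x * g x ≤ 0) :
    g 0 = 0 := by
  have hmax : IsLocalMax (fun x => x * g x) 0 :=
    Filter.Eventually.of_forall (fun x => by simpa using hs x)
  have hd : HasDerivAt (fun x => x * g x) (1 * g 0 + 0 * deriv g 0) 0 :=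
    (hasDerivAt_id 0).mul (hg 0).hasDerivAt
  have := hmax.deriv_eq_zero
  rw [hd.deriv] at this
  linarith
/-- Invariance/growth lemma: if `d' ≥ δ > 0` whenever `d ≥ ε` (on `[s,∞)`), and `d s ≥ ε`,
then `d x ≥ ε + δ(x-s)` for `x ≥ s`. -/
lemma aux_IL {d : ℝ → ℝ} (hd : Differentiable ℝ d) {s ε δ : ℝ} (hδ : 0 < δ)
    (hds : ε ≤ d s)
    (hstep : ∀ x, s ≤ x → ε ≤ d x → δ ≤ deriv d x) :
    ∀ x, s ≤ x → ε + δ * (x - s) ≤ d x := by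
  have key : ∀ x, s ≤ x → ε ≤ d x := by
    by_contra hcon
    push_neg at hcon
    obtain ⟨x₂, hx₂s, hx₂⟩ := hcon
    set Z := {x | x ∈ Icc s x₂ ∧ d x < ε} with hZ
    have hZne : Z.Nonempty := ⟨x₂, ⟨hx₂s, le_rfl⟩, hx₂⟩
    have hZbdd : BddBelow Z := ⟨s, fun z hz => hz.1.1⟩
    set t := sInf Z with ht
    have hts : s ≤ t := le_csInf hZne (fun z hz => hz.1.1)
    have htx₂ : t ≤ x₂ := csInf_le hZbdd ⟨⟨hx₂s, le_rfl⟩, hx₂⟩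
    have hdt_le : d t ≤ ε := by
      have hcl : t ∈ closure Z := csInf_mem_closure hZne hZbdd
      have hsub : closure Z ⊆ {x | d x ≤ ε} := by
        apply closure_minimal
        · intro z hz; exact le_of_lt hz.2
        · exact isClosed_le hd.continuous continuous_const
      exact hsub hcl
    have hbefore : ∀ x, s ≤ x → x < t → ε ≤ d x := by
      intro x hsx hxt
      by_contra hlt
      push_neg at hlt
      have : x ∈ Z := ⟨⟨hsx, le_of_lt (lt_of_lt_of_le hxt htx₂)⟩, hlt⟩
      exact absurd (csInf_le hZbdd this) (not_le.mpr hxt)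
    rcases eq_or_lt_of_le hts with heq | hlt
    · -- t = s : derivative at s is ≥ δ > 0, but points of Z accumulate at s from the right
      have hdse : d s = ε := le_antisymm (heq ▸ hdt_le) hds
      have hder : δ ≤ deriv d s := hstep s le_rfl hds
      have hda : HasDerivAt d (deriv d s) s := (hd s).hasDerivAt
      have hslope : ∀ᶠ z in nhdsWithin s {s}ᶜ, 0 < slope d s z :=
        (hasDerivAt_iff_tendsto_slope.mp hda).eventually
          (eventually_gt_nhds (lt_of_lt_of_le hδ hder))
      rw [eventually_nhdsWithin_iff] at hslope
      rw [Metric.eventually_nhds_iff] at hslope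
      obtain ⟨η, hη, hη'⟩ := hslope
      have hsinf : sInf Z < s + η := by rw [← ht, ← heq]; linarith
      obtain ⟨z, hzZ, hzlt⟩ := exists_lt_of_csInf_lt hZne hsinf
      have hzs : s ≤ z := hzZ.1.1
      have hzne : z ≠ s := by
        intro hzeq
        have h2 : d z < ε := hzZ.2
        rw [hzeq, hdse] at h2
        exact lt_irrefl ε h2
      have hdist : dist z s < η := by
        rw [Real.dist_eq, abs_of_nonneg (by linarith)]; linarith
      have hslz : 0 < slope d s z := hη' hdist hzne
      rw [slope_def_field] at hslz
      have hzgt : s < z := lt_of_le_of_ne hzs (Ne.symm hzne)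
      have hmul := mul_pos hslz (sub_pos.mpr hzgt)
      rw [div_mul_cancel₀ _ (by linarith : z - s ≠ 0)] at hmul
      have : d z < ε := hzZ.2
      linarith
    · -- s < t : monotonicity on [s,t] forces d t > ε, contradiction
      have hgrow := (convex_Icc s t).mul_sub_le_image_sub_of_le_deriv
        (f := d) hd.continuous.continuousOn hd.differentiableOn (C := δ)
        ?hge s (by constructor <;> [exact le_rfl; exact le_of_lt hlt])
        t (by constructor <;> [exact le_of_lt hlt; exact le_rfl]) (le_of_lt hlt)
      · nlinarith [hgrow, hdt_le]
      · intro y hy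
        rw [interior_Icc] at hy
        exact hstep y (le_of_lt hy.1) (hbefore y (le_of_lt hy.1) hy.2)
  -- now the growth bound
  intro x hx
  have hgrow := (convex_Ici s).mul_sub_le_image_sub_of_le_deriv
    (f := d) hd.continuous.continuousOn hd.differentiableOn (C := δ)
    (fun y hy => hstep y (le_of_lt (by rwa [interior_Ici] at hy)) (key y (le_of_lt (by rwa [interior_Ici] at hy))))
    s (mem_Ici.mpr le_rfl) x (mem_Ici.mpr hx) hx
  linarith

/-- Riccati-type blow-up: impossible for a global `d` to satisfy
`d' x ≥ (m/2) F'(m/2)` whenever `m ≤ d x` (for `x ≥ x₁`) while `d x₁ > 0`. -/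
lemma aux_blowup {F : ℝ → ℝ} (hF : Assumption2 F) {C x₀ : ℝ} (hC : 0 < C) (hx₀ : 0 < x₀)
    (hlin : ∀ y, 2 * x₀ ≤ y → C * (y - 2 * x₀) ≤ deriv F y)
    {d : ℝ → ℝ} (hd : Differentiable ℝ d) {x₁ : ℝ}
    (hkey : ∀ x m, x₁ ≤ x → 0 < m → m ≤ d x → m / 2 * deriv F (m / 2) ≤ deriv d x)
    (hd₁ : 0 < d x₁) : False := by
  obtain ⟨ε, hε⟩ : ∃ ε, ε = d x₁ := ⟨_, rfl⟩
  have hεpos : 0 < ε := hε ▸ hd₁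
  obtain ⟨δ₁, hδ₁⟩ : ∃ δ₁, δ₁ = ε / 2 * deriv F (ε / 2) := ⟨_, rfl⟩
  have hδ₁pos : 0 < δ₁ := hδ₁ ▸ mul_pos (by linarith) (aux_derivF_pos hF (by linarith))
  -- phase 1: linear growth of d
  have hphase1 : ∀ x, x₁ ≤ x → ε + δ₁ * (x - x₁) ≤ d x := by
    apply aux_IL hd hδ₁pos (le_of_eq hε)
    intro x hx hdx
    rw [hδ₁]
    exact hkey x ε hx hεpos hdx
  -- phase 2 setup
  obtain ⟨x₂, hx₂⟩ : ∃ x₂, x₂ = x₁ + (8 * x₀ + 1) / δ₁ := ⟨_, rfl⟩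
  have hx₂1 : x₁ ≤ x₂ := by
    rw [hx₂]
    have : 0 ≤ (8 * x₀ + 1) / δ₁ := by positivity
    linarith
  have hdθ : ∀ x, x₂ ≤ x → 8 * x₀ + 1 ≤ d x ∧ ε ≤ d x := by
    intro x hx
    have h1 := hphase1 x (le_trans hx₂1 hx)
    have h3 : (8 * x₀ + 1) / δ₁ ≤ x - x₁ := by rw [hx₂] at hx; linarith
    have h2 : (8 * x₀ + 1) ≤ δ₁ * (x - x₁) := by
      calc (8 * x₀ + 1) = δ₁ * ((8 * x₀ + 1) / δ₁) := by field_simp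
        _ ≤ δ₁ * (x - x₁) := by nlinarith
    constructor <;> linarith
  have hdpos : ∀ x, x₂ ≤ x → 0 < d x := by
    intro x hx
    have := (hdθ x hx).1
    linarith
  have hquad : ∀ x, x₂ ≤ x → C / 8 * (d x) ^ 2 ≤ deriv d x := by
    intro x hx
    have hdbig := (hdθ x hx).1
    have hdp := hdpos x hx
    have h1 := hkey x (d x) (le_trans hx₂1 hx) hdp le_rfl
    have h2 : C * (d x / 2 - 2 * x₀) ≤ deriv F (d x / 2) := hlin _ (by linarith)
    have h3 : d x / 4 ≤ d x / 2 - 2 * x₀ := by linarith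
    have h4 : C * (d x / 4) ≤ deriv F (d x / 2) := by nlinarith
    nlinarith [mul_le_mul_of_nonneg_left h4 (le_of_lt (by linarith : (0:ℝ) < d x / 2))]
  -- r = 1/d decreases at rate C/8 on [x₂, ∞), contradiction with positivity
  obtain ⟨r, hrdef⟩ : ∃ r : ℝ → ℝ, r = fun x => (d x)⁻¹ := ⟨_, rfl⟩
  have hrval : ∀ x, r x = (d x)⁻¹ := fun x => by rw [hrdef]
  have hdne : ∀ x, x₂ ≤ x → d x ≠ 0 := fun x hx => ne_of_gt (hdpos x hx)
  have hrc : ContinuousOn r (Ici x₂) := by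
    rw [hrdef]
    exact ContinuousOn.inv₀ hd.continuous.continuousOn (fun x hx => hdne x hx)
  have hrd : DifferentiableOn ℝ r (interior (Ici x₂)) := by
    rw [hrdef, interior_Ici]
    intro x hx
    exact ((hd x).inv (hdne x (le_of_lt hx))).differentiableWithinAt
  have hrder : ∀ x, x₂ < x → deriv r x ≤ -(C / 8) := by
    intro x hx
    have hda : HasDerivAt r (-(deriv d x) / (d x) ^ 2) x := by
      rw [hrdef]
      exact ((hd x).hasDerivAt).inv (hdne x hx.le)
    rw [hda.deriv]
    have hdp : 0 < d x := hdpos x hx.le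
    have hq := hquad x hx.le
    have hsq : (0:ℝ) < (d x) ^ 2 := by positivity
    have h5 : C / 8 ≤ deriv d x / (d x) ^ 2 := by
      rw [le_div_iff₀ hsq]; nlinarith
    have h6 : -(deriv d x) / (d x) ^ 2 = -(deriv d x / (d x) ^ 2) := by ring
    linarith [h6 ▸ le_refl (-(deriv d x) / (d x) ^ 2), h5]
  have hdecr := (convex_Ici x₂).image_sub_le_mul_sub_of_deriv_le hrc hrd
    (C := -(C / 8)) (fun x hx => hrder x (by rwa [interior_Ici, mem_Ioi] at hx))
  have hrx₂pos : 0 < r x₂ := by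
    rw [hrval]
    have := hdpos x₂ le_rfl
    positivity
  obtain ⟨y, hy⟩ : ∃ y, y = x₂ + 8 / C * (1 + r x₂) := ⟨_, rfl⟩
  have hyge : x₂ ≤ y := by
    rw [hy]
    have : 0 < 8 / C * (1 + r x₂) := by positivity
    linarith
  have hfinal := hdecr x₂ (mem_Ici.mpr le_rfl) y (mem_Ici.mpr hyge) hyge
  have hry : 0 < r y := by
    rw [hrval]
    have := hdpos y hyge
    positivity
  have hcomp : -(C / 8) * (y - x₂) = -(1 + r x₂) := by
    rw [hy]; field_simp; ring
  rw [hcomp] at hfinal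
  linarith

/-- Core comparison lemma: two solutions of the first-order ODE with constants `b ≤ c`
and the sign condition cannot satisfy `h x₁ < g x₁` at a point `x₁ ≥ 0`. -/
lemma aux_GB {F : ℝ → ℝ} (hF : Assumption2 F) {a b c : ℝ} {g h : ℝ → ℝ}
    (hg : Differentiable ℝ g) (hh : Differentiable ℝ h)
    (hgo : ∀ x, deriv g x = a * x ^ 2 - b - F (g x))
    (hho : ∀ x, deriv h x = a * x ^ 2 - c - F (h x))
    (hbc : b ≤ c)
    (hgsign : ∀ x, x * g x ≤ 0) (hhsign : ∀ x, x * h x ≤ 0)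
    {x₁ : ℝ} (hx₁ : 0 ≤ x₁) (hgh : h x₁ < g x₁) : False := by
  obtain ⟨C, hC, x₀, hx₀, hCd⟩ := hF.second_deriv_lb
  -- linear lower bound for deriv F beyond 2 x₀
  have hlin : ∀ y, 2 * x₀ ≤ y → C * (y - 2 * x₀) ≤ deriv F y := by
    intro y hy
    have hcont : ContinuousOn (deriv F) (Ici (2 * x₀)) := by
      intro z hz
      rw [mem_Ici] at hz
      exact ((hF.deriv_diffOn z (mem_Ici.mpr (by linarith))).continuousAt).continuousWithinAt
    have hdiff : DifferentiableOn ℝ (deriv F) (interior (Ici (2 * x₀))) := by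
      rw [interior_Ici]
      intro z hz
      rw [mem_Ioi] at hz
      exact (hF.deriv_diffOn z (mem_Ici.mpr (by linarith))).differentiableWithinAt
    have key := (convex_Ici (2 * x₀)).mul_sub_le_image_sub_of_le_deriv hcont hdiff
      (C := C) ?hge (2 * x₀) (mem_Ici.mpr le_rfl) y (mem_Ici.mpr hy) hy
    · have h0 : 0 ≤ deriv F (2 * x₀) := aux_derivF_nonneg hF (by linarith)
      linarith
    · intro z hz
      rw [interior_Ici, mem_Ioi] at hz
      have : x₀ < |z| := by rw [abs_of_pos (by linarith)]; linarith
      exact le_of_lt (hCd z this)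
  -- sign conditions as nonpositivity on [0,∞)
  have hg0 : g 0 = 0 := aux_sign_zero hg hgsign
  have hh0 : h 0 = 0 := aux_sign_zero hh hhsign
  have hgs : ∀ x, 0 ≤ x → g x ≤ 0 := by
    intro x hx
    rcases eq_or_lt_of_le hx with he | hlt
    · rw [← he, hg0]
    · nlinarith [hgsign x]
  have hhs : ∀ x, 0 ≤ x → h x ≤ 0 := by
    intro x hx
    rcases eq_or_lt_of_le hx with he | hlt
    · rw [← he, hh0]
    · nlinarith [hhsign x]
  have hd : Differentiable ℝ (fun x => g x - h x) := hg.sub hh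
  have hdd : ∀ x, deriv (fun x => g x - h x) x = (c - b) + (F (h x) - F (g x)) := by
    intro x
    rw [deriv_fun_sub (hg x) (hh x), hgo, hho]; ring
  -- the key differential inequality
  have hkey : ∀ x m, x₁ ≤ x → 0 < m → m ≤ g x - h x →
      m / 2 * deriv F (m / 2) ≤ deriv (fun x => g x - h x) x := by
    intro x m hx hm hmd
    have hx0 : 0 ≤ x := le_trans hx₁ hx
    have hgx : g x ≤ 0 := hgs x hx0
    have hhx : h x ≤ 0 := hhs x hx0
    have eg : F (g x) = F (-g x) := (hF.even (g x)).symm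
    have eh : F (h x) = F (-h x) := (hF.even (h x)).symm
    have hp0 : 0 ≤ -g x := by linarith
    have hqp : -g x + m ≤ -h x := by linarith
    have h1 : F (-g x + m) ≤ F (-h x) :=
      aux_monoF hF (mem_Ici.mpr (by linarith)) (mem_Ici.mpr (by linarith)) hqp
    have h2 : deriv F (-g x + m / 2) * (m / 2) ≤ F (-g x + m / 2 + m / 2) - F (-g x + m / 2) :=
      aux_tangent hF (by linarith) (by linarith)
    have h2' : F (-g x + m) = F (-g x + m / 2 + m / 2) := by ring_nf
    have h3 : F (-g x) ≤ F (-g x + m / 2) :=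
      aux_monoF hF (mem_Ici.mpr hp0) (mem_Ici.mpr (by linarith)) (by linarith)
    have h4 : deriv F (m / 2) ≤ deriv F (-g x + m / 2) :=
      aux_monoF' hF (mem_Ici.mpr (by linarith)) (mem_Ici.mpr (by linarith)) (by linarith)
    have h5 : (0:ℝ) < m / 2 := by linarith
    rw [hdd x]
    have h6 := mul_le_mul_of_nonneg_right h4 (le_of_lt h5)
    rw [eg, eh]
    nlinarith
  exact aux_blowup hF hC hx₀ hlin hd hkey (by simp; linarith)

/-- Lemma A.6: the unique solution of the first-order ODE `g' = a·x² − b_F − F(g)` with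
`x·g(x) ≤ 0` is twice differentiable and solves the second-order ODE
`g'' = 2a·x − F'(g)·g'`; moreover it is the unique twice differentiable solution of this
second-order ODE on `ℝ` with `x·g(x) ≤ 0`. -/
theorem stmt14 (F : ℝ → ℝ) (hF : Assumption2 F) (a bF : ℝ) (ha : 0 < a) (g : ℝ → ℝ)
    (hg : Differentiable ℝ g)
    (hode : ∀ x : ℝ, deriv g x = a * x ^ 2 - bF - F (g x))
    (hsign : ∀ x : ℝ, x * g x ≤ 0) :
    Differentiable ℝ (deriv g) ∧
    (∀ x : ℝ, deriv (deriv g) x = 2 * a * x - deriv F (g x) * deriv g x) ∧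
    ∀ h : ℝ → ℝ, Differentiable ℝ h → Differentiable ℝ (deriv h) →
      (∀ x : ℝ, deriv (deriv h) x = 2 * a * x - deriv F (h x) * deriv h x) →
      (∀ x : ℝ, x * h x ≤ 0) → h = g := by
  have hdg : deriv g = fun x => a * x ^ 2 - bF - F (g x) := funext hode
  have hdiff2 : Differentiable ℝ (fun x : ℝ => a * x ^ 2 - bF - F (g x)) := by
    apply Differentiable.sub
    · exact ((differentiable_pow 2).const_mul a).sub_const bF
    · exact hF.diff.comp hg
  have hpart1 : Differentiable ℝ (deriv g) := by rw [hdg]; exact hdiff2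
  have hpart2 : ∀ x : ℝ, deriv (deriv g) x = 2 * a * x - deriv F (g x) * deriv g x := by
    intro x
    have h1 : HasDerivAt (fun x : ℝ => a * x ^ 2) (a * (2 * x ^ 1)) x :=
      (hasDerivAt_pow 2 x).const_mul a
    have h2 : HasDerivAt (fun x : ℝ => F (g x)) (deriv F (g x) * deriv g x) x :=
      ((hF.diff (g x)).hasDerivAt).comp x (hg x).hasDerivAt
    have h3 : HasDerivAt (fun x : ℝ => a * x ^ 2 - bF - F (g x))
        (a * (2 * x ^ 1) - deriv F (g x) * deriv g x) x := (h1.sub_const bF).sub h2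
    conv_lhs => rw [hdg]
    rw [h3.deriv]; ring
  refine ⟨hpart1, hpart2, ?_⟩
  intro h hh hh' hode2 hsign2
  -- derive the first-order ODE for h, with constant c := -(deriv h 0 + F (h 0))
  obtain ⟨c, hc⟩ : ∃ c, c = -(deriv h 0 + F (h 0)) := ⟨_, rfl⟩
  have hho : ∀ x, deriv h x = a * x ^ 2 - c - F (h x) := by
    have hq : Differentiable ℝ (fun x => deriv h x + F (h x) - a * x ^ 2) := by
      apply Differentiable.sub
      · exact hh'.add (hF.diff.comp hh)
      · exact (differentiable_pow 2).const_mul a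
    have hq' : ∀ x, deriv (fun x => deriv h x + F (h x) - a * x ^ 2) x = 0 := by
      intro x
      have h1 : HasDerivAt (deriv h) (deriv (deriv h) x) x := (hh' x).hasDerivAt
      have h2 : HasDerivAt (fun x : ℝ => F (h x)) (deriv F (h x) * deriv h x) x :=
        ((hF.diff (h x)).hasDerivAt).comp x (hh x).hasDerivAt
      have h3 : HasDerivAt (fun x : ℝ => a * x ^ 2) (a * (2 * x ^ 1)) x :=
        (hasDerivAt_pow 2 x).const_mul a
      have h4 : HasDerivAt (fun x => deriv h x + F (h x) - a * x ^ 2)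
          (deriv (deriv h) x + deriv F (h x) * deriv h x - a * (2 * x ^ 1)) x :=
        (h1.add h2).sub h3
      rw [h4.deriv, hode2 x]; ring
    intro x
    have hconst := is_const_of_deriv_eq_zero hq hq' x 0
    have : deriv h x + F (h x) - a * x ^ 2 = deriv h 0 + F (h 0) - a * 0 ^ 2 := hconst
    rw [hc]; linarith [this]
  -- zero values at the origin
  have hg0 : g 0 = 0 := aux_sign_zero hg hsign
  have hh0 : h 0 = 0 := aux_sign_zero hh hsign2
  -- reflection machinery
  have hrefl : ∀ (k : ℝ → ℝ) (e : ℝ), Differentiable ℝ k →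
      (∀ x, deriv k x = a * x ^ 2 - e - F (k x)) → (∀ x, x * k x ≤ 0) →
      Differentiable ℝ (fun x => -k (-x)) ∧
      (∀ x, deriv (fun x => -k (-x)) x = a * x ^ 2 - e - F (-k (-x))) ∧
      (∀ x, x * (-k (-x)) ≤ 0) := by
    intro k e hk hko hks
    have hdk : ∀ x : ℝ, HasDerivAt (fun x => -k (-x)) (deriv k (-x)) x := by
      intro x
      have h1 : HasDerivAt k (deriv k (-x)) (-x) := (hk (-x)).hasDerivAt
      have h2 : HasDerivAt (fun x : ℝ => -x) (-1) x := hasDerivAt_neg x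
      have h3 : HasDerivAt (fun x => k (-x)) (deriv k (-x) * (-1)) x := h1.comp x h2
      have h4 : HasDerivAt (fun x => -k (-x)) (-(deriv k (-x) * -1)) x := h3.fun_neg
      convert h4 using 1; ring
    refine ⟨fun x => (hdk x).differentiableAt, ?_, ?_⟩
    · intro x
      rw [(hdk x).deriv, hko (-x), ← hF.even (k (-x))]
      ring_nf
    · intro x
      have := hks (-x)
      nlinarith []
  -- b = c
  have hbc : c = bF := by
    rcases lt_trichotomy bF c with hlt | heq | hgt
    · exfalso
      -- d = g - h grows linearly from 0, then GB
      have hd : Differentiable ℝ (fun x => g x - h x) := hg.sub hh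
      have hgrow : ∀ x, (0:ℝ) ≤ x → 0 + (c - bF) * (x - 0) ≤ g x - h x := by
        apply aux_IL hd (by linarith) (by simp [hg0, hh0])
        intro x hx hdx
        have hgx : g x ≤ 0 := by
          rcases eq_or_lt_of_le hx with he | hpos
          · rw [← he, hg0]
          · nlinarith [hsign x]
        have hhx : h x ≤ 0 := by
          rcases eq_or_lt_of_le hx with he | hpos
          · rw [← he, hh0]
          · nlinarith [hsign2 x]
        have hFgh : F (g x) ≤ F (h x) := by
          rw [← hF.even (g x), ← hF.even (h x)]
          exact aux_monoF hF (mem_Ici.mpr (by linarith)) (mem_Ici.mpr (by linarith))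
            (by linarith)
        rw [deriv_fun_sub (hg x) (hh x), hode x, hho x]
        linarith
      have h1 := hgrow 1 (by norm_num)
      have hgh1 : h 1 < g 1 := by linarith
      exact aux_GB hF hg hh hode hho (le_of_lt hlt) hsign hsign2 (by norm_num) hgh1
    · exact heq.symm
    · exfalso
      have hd : Differentiable ℝ (fun x => h x - g x) := hh.sub hg
      have hgrow : ∀ x, (0:ℝ) ≤ x → 0 + (bF - c) * (x - 0) ≤ h x - g x := by
        apply aux_IL hd (by linarith) (by simp [hg0, hh0])
        intro x hx hdx
        have hgx : g x ≤ 0 := by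
          rcases eq_or_lt_of_le hx with he | hpos
          · rw [← he, hg0]
          · nlinarith [hsign x]
        have hhx : h x ≤ 0 := by
          rcases eq_or_lt_of_le hx with he | hpos
          · rw [← he, hh0]
          · nlinarith [hsign2 x]
        have hFgh : F (h x) ≤ F (g x) := by
          rw [← hF.even (g x), ← hF.even (h x)]
          exact aux_monoF hF (mem_Ici.mpr (by linarith)) (mem_Ici.mpr (by linarith))
            (by linarith)
        rw [deriv_fun_sub (hh x) (hg x), hode x, hho x]
        linarith
      have h1 := hgrow 1 (by norm_num)
      have hhg1 : g 1 < h 1 := by linarith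
      exact aux_GB hF hh hg hho hode (le_of_lt hgt) hsign2 hsign (by norm_num) hhg1
  -- equality of the functions
  rw [hbc] at hho
  funext x
  rcases lt_trichotomy x 0 with hx | hx | hx
  · -- use reflections
    obtain ⟨hg2, hgo2, hgs2⟩ := hrefl g bF hg hode hsign
    obtain ⟨hh2, hho2, hhs2⟩ := hrefl h bF hh hho hsign2
    by_contra hne
    rcases lt_or_gt_of_ne hne with hlt | hgt
    · -- h x < g x, so (-g(-·)) < (-h(-·)) at -x ≥ 0
      exact aux_GB hF hh2 hg2 hho2 hgo2 le_rfl hhs2 hgs2 (x₁ := -x) (by linarith)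
        (by simp only [neg_neg]; linarith)
    · exact aux_GB hF hg2 hh2 hgo2 hho2 le_rfl hgs2 hhs2 (x₁ := -x) (by linarith)
        (by simp only [neg_neg]; linarith)
  · rw [hx, hg0, hh0]
  · by_contra hne
    rcases lt_or_gt_of_ne hne with hlt | hgt
    · exact aux_GB hF hg hh hode hho le_rfl hsign hsign2 (le_of_lt hx) hlt
    · exact aux_GB hF hh hg hho hode le_rfl hsign2 hsign (le_of_lt hx) hgt
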